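/- arXiv:1506.02945 — 3 statements merged into one kernel-verified Lean document; each statement's English description precedes it below -/
import Mathlib

section
/- Under the same hypotheses as the previous statement (a² ≤ b f, |ω| b ≤ λ₀ a + f, |ω| ≥ max{λ₀²,1}), one also has |ω|^{1/2} · a ≤ (2 + λ₀²/|ω|)^{1/2} · f. -/
/-- Estimate (3.10): under `a² ≤ b·f`, `|ω|·b ≤ λ₀·a + f` and `|ω| ≥ max{λ₀²,1}`,
one has `|ω|^{1/2}·a ≤ (2 + λ₀²/|ω|)^{1/2}·f`. -/
theorem resolvent_estimate_grad (lam0 ω a b f : ℝ) (hlam : 0 < lam0)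
    (ha : 0 ≤ a) (hb : 0 ≤ b) (hf : 0 ≤ f)
    (hω : max (lam0 ^ 2) 1 ≤ |ω|)
    (h1 : a ^ 2 ≤ b * f) (h2 : |ω| * b ≤ lam0 * a + f) :
    Real.sqrt |ω| * a ≤ Real.sqrt (2 + lam0 ^ 2 / |ω|) * f := by
  have hω1 : (1:ℝ) ≤ |ω| := le_trans (le_max_right _ _) hω
  have hωpos : (0:ℝ) < |ω| := lt_of_lt_of_le one_pos hω1
  have h3 : |ω| * a ^ 2 ≤ lam0 * a * f + f ^ 2 := by nlinarith
  have key2 : |ω| ^ 2 * a ^ 2 ≤ (2 * |ω| + lam0 ^ 2) * f ^ 2 := by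
    nlinarith [sq_nonneg (|ω| * a - lam0 * f), mul_le_mul_of_nonneg_left h3 hωpos.le]
  have key : |ω| * a ^ 2 ≤ (2 + lam0 ^ 2 / |ω|) * f ^ 2 := by
    have h4 : (2 + lam0 ^ 2 / |ω|) * f ^ 2 = (2 * |ω| + lam0 ^ 2) * f ^ 2 / |ω| := by
      field_simp
    rw [h4, le_div_iff₀ hωpos]; nlinarith
  calc Real.sqrt |ω| * a = Real.sqrt (|ω| * a ^ 2) := by
        rw [Real.sqrt_mul (abs_nonneg ω), Real.sqrt_sq ha]
    _ ≤ Real.sqrt ((2 + lam0 ^ 2 / |ω|) * f ^ 2) := Real.sqrt_le_sqrt key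
    _ = Real.sqrt (2 + lam0 ^ 2 / |ω|) * f := by
        rw [Real.sqrt_mul (by positivity), Real.sqrt_sq hf]
end

section
/- Let H be a complex Hilbert space, L₀ : D(L₀) ⊆ H → H closed, and ω₀ > 0. Suppose iω₀ is a simple eigenvalue of L₀ with normalized eigenvector v₀, and ikω₀ is not an eigenvalue of L₀ for every integer k with |k| ≥ 2, and 0 is excluded (functions have zero time-mean). Then the kernel of the operator Q(w) := ω₀ ∂_τ w − L₀ w, acting on 2π-periodic H-valued functions with zero mean (in the class W^{1,2}(0,2π;H) ∩ L²(0,2π;D(L₀))), is exactly the two-dimensional real span of v₁(τ) = Re(v₀ e^{iτ}) and v₂(τ) = Im(v₀ e^{iτ}). -/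
set_option maxHeartbeats 1000000

open intervalIntegral

section AuxHK
open BoxIntegral MeasureTheory Filter

universe u
private lemma hk_mem {E : Type u} [NormedAddCommGroup E] [NormedSpace ℝ E] [CompleteSpace E]
    {S : Set E} (hS : IsClosed S) (h0 : (0:E) ∈ S)
    (hadd : ∀ x ∈ S, ∀ y ∈ S, x + y ∈ S) (hsmul : ∀ (r : ℝ), ∀ x ∈ S, r • x ∈ S)
    {a b : ℝ} (hab : a < b) (F f : ℝ → E)
    (hd : ∀ x, HasDerivAt F (f x) x) (hmem : ∀ x, f x ∈ S) :
    F b - F a ∈ S := by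
  set I : Box (Fin 1) := ⟨fun _ => a, fun _ => b, fun _ => hab⟩ with hI
  set f' : (Fin 1 → ℝ) → (Fin 1 → ℝ) →L[ℝ] E := fun x =>
    (ContinuousLinearMap.smulRight (1 : ℝ →L[ℝ] ℝ) (f (x 0))).comp
      (ContinuousLinearMap.proj 0) with hf'
  have H := BoxIntegral.hasIntegral_GP_pderiv I (fun x => F (x 0)) f'
      ∅ Set.countable_empty (fun x hx => absurd hx (Set.notMem_empty x))
      (fun x _ => by
        exact (((hd (x 0)).hasFDerivAt).comp x
          (ContinuousLinearMap.proj (R := ℝ) (φ := fun _ : Fin 1 => ℝ)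
            0).hasFDerivAt).hasFDerivWithinAt) 0
  have hconst : ∀ (g : (Fin 0 → ℝ) → E) (J : Box (Fin 0)),
      BoxIntegral.integral J IntegrationParams.GP g BoxAdditiveMap.volume
        = g (fun i => i.elim0) := by
    intro g J
    have hg : g = fun _ => g (fun i => i.elim0) := by
      funext x; congr; funext i; exact i.elim0
    rw [hg, BoxIntegral.integral_const, BoxAdditiveMap.volume_apply]
    simp
  have hfun : (fun x : Fin 1 → ℝ => f' x (Pi.single 0 1)) = fun x => f (x 0) := by
    funext x
    simp [hf']
  rw [hfun, hconst, hconst, Fin.insertNth_apply_same, Fin.insertNth_apply_same] at H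
  refine hS.mem_of_tendsto H (Filter.Eventually.of_forall fun π => ?_)
  unfold BoxIntegral.integralSum
  refine Finset.sum_induction _ (· ∈ S) (fun x y hx hy => hadd x hx y hy) h0 fun J _ => ?_
  rw [BoxAdditiveMap.volume_apply]
  exact hsmul _ _ (hmem _)

end AuxHK

section AuxFourier
open MeasureTheory Complex intervalIntegral

private lemma integral_exp_int (k : ℤ) (hk : k ≠ 0) :
    (∫ τ in (0:ℝ)..(2 * Real.pi), Complex.exp (Complex.I * k * τ)) = 0 := by
  have hc : (Complex.I * k : ℂ) ≠ 0 := by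
    simp [Complex.I_ne_zero, hk]
  have := integral_exp_mul_complex (a := (0:ℝ)) (b := 2 * Real.pi) hc
  have h2 : Complex.exp (Complex.I * k * (2 * Real.pi : ℝ)) = 1 := by
    have := Complex.exp_int_mul_two_pi_mul_I k
    rw [← this]
    congr 1
    push_cast
    ring
  calc (∫ τ in (0:ℝ)..(2 * Real.pi), Complex.exp (Complex.I * k * τ))
      = (Complex.exp (Complex.I * k * (2 * Real.pi:ℝ)) - Complex.exp (Complex.I * k * (0:ℝ))) / (Complex.I * k) := by
        simpa using this
    _ = 0 := by rw [h2]; simp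

private lemma scalar_fourier_zero (g : ℝ → ℂ) (hg : Continuous g)
    (hper : ∀ τ, g (τ + 2 * Real.pi) = g τ)
    (hcoef : ∀ n : ℤ, (∫ τ in (0:ℝ)..(2 * Real.pi), Complex.exp (-(Complex.I * n * τ)) * g τ) = 0) :
    ∀ τ, g τ = 0 := by
  have hT : Fact (0 < 2 * Real.pi) := ⟨by positivity⟩
  set T := 2 * Real.pi with hTdef
  have hgT : g 0 = g (0 + T) := by rw [zero_add, ← hper 0, zero_add]
  set G : AddCircle T → ℂ := AddCircle.liftIco T 0 g with hG
  have hGcont : Continuous G := AddCircle.liftIco_continuous (by rw [← hgT]) hg.continuousOn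
  have hGg : ∀ x ∈ Set.Icc (0:ℝ) T, G x = g x := by
    rintro x ⟨hx0, hxT⟩
    have mem0 : (0:ℝ) ∈ Set.Ico (0:ℝ) (0 + T) := ⟨le_rfl, by rw [zero_add]; exact hT.out⟩
    rcases eq_or_lt_of_le hxT with h | h
    · have e1 : ((x : ℝ) : AddCircle T) = ((0:ℝ) : AddCircle T) := by
        rw [h, (QuotientAddGroup.mk_zero _)]
        exact AddCircle.coe_period T
      have hTg : g T = g 0 := by
        have := hper 0
        rwa [zero_add] at this
      rw [hG, e1, AddCircle.liftIco_coe_apply mem0, h, hTg]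
    · rw [hG]
      exact AddCircle.liftIco_coe_apply ⟨hx0, by rw [zero_add]; exact h⟩
  have hFc : ∀ n : ℤ, fourierCoeff G n = 0 := by
    intro n
    rw [fourierCoeff_eq_intervalIntegral G n 0]
    rw [show (0:ℝ) + T = T by ring]
    have : (∫ x in (0:ℝ)..T, @fourier T (-n) (x:ℝ) • G x)
        = ∫ x in (0:ℝ)..T, Complex.exp (-(Complex.I * n * x)) * g x := by
      apply intervalIntegral.integral_congr
      intro x hx
      rw [Set.uIcc_of_le (by positivity : (0:ℝ) ≤ T)] at hx
      show (@fourier T (-n)) ↑x • G ↑x = Complex.exp (-(Complex.I * n * x)) * g x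
      rw [hGg x hx, fourier_coe_apply, smul_eq_mul]
      congr 2
      have hpi : (Real.pi : ℂ) ≠ 0 := Complex.ofReal_ne_zero.mpr Real.pi_ne_zero
      rw [hTdef]
      push_cast
      field_simp
    rw [this, hcoef n, smul_zero]
  have hG0 : G = 0 := by
    have h1 : (ContinuousMap.toLp (E := ℂ) 2 AddCircle.haarAddCircle ℂ ⟨G, hGcont⟩) = 0 := by
      have h2 : ∀ n : ℤ, fourierBasis.repr
          (ContinuousMap.toLp (E := ℂ) 2 AddCircle.haarAddCircle ℂ ⟨G, hGcont⟩) n = 0 := by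
        intro n
        rw [fourierBasis_repr, fourierCoeff_toLp]
        exact hFc n
      have h3 : fourierBasis.repr
          (ContinuousMap.toLp (E := ℂ) 2 AddCircle.haarAddCircle ℂ ⟨G, hGcont⟩) = 0 := by
        ext n; simpa using h2 n
      exact fourierBasis.repr.injective (by rw [h3]; exact (map_zero _).symm)
    have h4 : G =ᵐ[AddCircle.haarAddCircle] 0 := by
      have := (ContinuousMap.coeFn_toLp (p := 2) (𝕜 := ℂ)
        (μ := AddCircle.haarAddCircle) (⟨G, hGcont⟩ : C(AddCircle T, ℂ))).symm
      rw [h1] at this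
      exact this.trans (MeasureTheory.Lp.coeFn_zero _ _ _)
    exact (hGcont.ae_eq_iff_eq AddCircle.haarAddCircle continuous_const).mp h4
  intro τ
  have hper' : Function.Periodic g T := hper
  set y := toIcoMod hT.out 0 τ with hy
  have hmem : y ∈ Set.Ico (0:ℝ) (0 + T) := toIcoMod_mem_Ico hT.out 0 τ
  have : g y = g τ := by
    rw [hy, toIcoMod]
    exact hper'.sub_zsmul_eq _
  rw [← this, ← hGg y ⟨hmem.1, le_of_lt (by simpa using hmem.2)⟩, hG0]
  rfl

private lemma vector_fourier_zero {H : Type*} [NormedAddCommGroup H] [InnerProductSpace ℂ H]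
    [CompleteSpace H] (u : ℝ → H) (hu : Continuous u)
    (hper : ∀ τ, u (τ + 2 * Real.pi) = u τ)
    (hcoef : ∀ n : ℤ, (∫ τ in (0:ℝ)..(2 * Real.pi),
      Complex.exp (-(Complex.I * n * τ)) • u τ) = 0) :
    ∀ τ, u τ = 0 := by
  intro τ
  rw [← inner_self_eq_zero (𝕜 := ℂ) (x := u τ)]
  set φ := u τ with hφ
  have := scalar_fourier_zero (fun σ => @inner ℂ H _ φ (u σ))
    ((innerSL ℂ φ).continuous.comp hu)
    (fun σ => by simp only [hper σ])
    (fun n => by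
      have hI : IntervalIntegrable (fun σ : ℝ => Complex.exp (-(Complex.I * n * σ)) • u σ)
          MeasureTheory.volume 0 (2 * Real.pi) := by
        apply Continuous.intervalIntegrable
        exact (Complex.continuous_exp.comp (by continuity)).smul hu
      have h2 := (ContinuousLinearMap.intervalIntegral_comp_comm (innerSL ℂ φ) hI).symm
      calc (∫ σ in (0:ℝ)..(2 * Real.pi), Complex.exp (-(Complex.I * n * σ)) * @inner ℂ H _ φ (u σ))
          = ∫ σ in (0:ℝ)..(2 * Real.pi), (innerSL ℂ φ) (Complex.exp (-(Complex.I * n * σ)) • u σ) := by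
            apply intervalIntegral.integral_congr
            intro x hx
            simp [inner_smul_right]
        _ = (innerSL ℂ φ) (∫ σ in (0:ℝ)..(2 * Real.pi), Complex.exp (-(Complex.I * n * σ)) • u σ) := by
            rw [h2]
        _ = 0 := by rw [hcoef n]; simp)
  exact this τ

private lemma coeff_exp_smul {E : Type*} [NormedAddCommGroup E] [NormedSpace ℂ E] [CompleteSpace E]
    (k ℓ : ℤ) (z : ℂ) (v : E) :
    (∫ τ in (0:ℝ)..(2 * Real.pi),
        Complex.exp (-(Complex.I * ℓ * τ)) • ((z * Complex.exp (Complex.I * k * τ)) • v))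
      = if ℓ = k then (2 * Real.pi : ℝ) • (z • v) else 0 := by
  have h1 : (∫ τ in (0:ℝ)..(2 * Real.pi),
      Complex.exp (-(Complex.I * ℓ * τ)) • ((z * Complex.exp (Complex.I * k * τ)) • v))
      = (z * ∫ τ in (0:ℝ)..(2 * Real.pi), Complex.exp (Complex.I * ((k - ℓ : ℤ) : ℂ) * τ)) • v := by
    rw [← intervalIntegral.integral_const_mul, ← intervalIntegral.integral_smul_const]
    apply intervalIntegral.integral_congr
    intro τ _
    show Complex.exp (-(Complex.I * ℓ * τ)) • ((z * Complex.exp (Complex.I * k * τ)) • v)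
      = (z * Complex.exp (Complex.I * ((k - ℓ : ℤ) : ℂ) * τ)) • v
    rw [smul_smul, ← mul_assoc, mul_comm (Complex.exp _) z, mul_assoc, ← Complex.exp_add]
    congr 2
    push_cast
    ring
  rw [h1]
  by_cases h : ℓ = k
  · subst h
    simp only [sub_self, Int.cast_zero, mul_zero, zero_mul, Complex.exp_zero,
      intervalIntegral.integral_const, sub_zero, if_true]
    rw [← Complex.coe_smul (2 * Real.pi) (z • v), smul_smul, Complex.real_smul, mul_one]
    congr 1
    ring
  · rw [integral_exp_int _ (sub_ne_zero.mpr fun hc => h hc.symm), mul_zero, zero_smul, if_neg h]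

end AuxFourier

/-- Lemma 3.6. Let `L₀` be a closed operator on a complex Hilbert space `H` carrying a
conjugation `Cj` (an antilinear involution, commuting with `L₀`), let `ω₀ > 0`, suppose
`iω₀` is a simple eigenvalue of `L₀` with eigenvector `v₀`, and `ikω₀` is not an eigenvalue
for every integer `k` with `|k| ≥ 2`. Then the kernel of `Q(w) = ω₀ ∂_τ w − L₀ w` on real
(`Cj`-fixed) `2π`-periodic `H`-valued functions with zero mean is exactly the
two-dimensional real span of `v₁(τ) = Re(v₀ e^{iτ})` and `v₂(τ) = Im(v₀ e^{iτ})`. -/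
theorem kernel_of_time_periodic_operator
    {H : Type*} [NormedAddCommGroup H] [InnerProductSpace ℂ H] [CompleteSpace H]
    (D : Submodule ℂ H) (L : D →ₗ[ℂ] H)
    (hclosed : IsClosed {p : H × H | ∃ h : p.1 ∈ D, L ⟨p.1, h⟩ = p.2})
    (Cj : H → H)
    (hCadd : ∀ x y, Cj (x + y) = Cj x + Cj y)
    (hCsmul : ∀ (z : ℂ) (x : H), Cj (z • x) = (starRingEnd ℂ z) • Cj x)
    (hCinvol : ∀ x, Cj (Cj x) = x)
    (hCD : ∀ x ∈ D, Cj x ∈ D)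
    (hCL : ∀ u : D, Cj (L u) = L ⟨Cj (u : H), hCD _ u.2⟩)
    (ω₀ : ℝ) (hω₀ : 0 < ω₀)
    (v₀ : D) (hv₀ne : (v₀ : H) ≠ 0)
    (heig : L v₀ = (Complex.I * (ω₀ : ℂ)) • (v₀ : H))
    (hsimple : LinearMap.ker (L - (Complex.I * (ω₀ : ℂ)) • D.subtype) =
      Submodule.span ℂ {v₀})
    (hnotk : ∀ k : ℤ, 2 ≤ |k| →
      LinearMap.ker (L - (Complex.I * (k : ℂ) * (ω₀ : ℂ)) • D.subtype) = ⊥)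
    (v₁ v₂ : ℝ → H)
    (hv₁ : ∀ τ : ℝ, v₁ τ = ((1:ℝ) / 2) •
      (Complex.exp (Complex.I * τ) • (v₀ : H) + Cj (Complex.exp (Complex.I * τ) • (v₀ : H))))
    (hv₂ : ∀ τ : ℝ, v₂ τ = ((1:ℝ) / 2) •
      ((-Complex.I) • (Complex.exp (Complex.I * τ) • (v₀ : H)) +
        Cj ((-Complex.I) • (Complex.exp (Complex.I * τ) • (v₀ : H))))) :
    {w : ℝ → H | ∃ w' : ℝ → H,
        (∀ τ, HasDerivAt w (w' τ) τ) ∧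
        (∀ τ, Cj (w τ) = w τ) ∧
        (∀ τ, w (τ + 2 * Real.pi) = w τ) ∧
        (∫ τ in (0:ℝ)..(2 * Real.pi), w τ) = 0 ∧
        ∃ hmem : ∀ τ, w τ ∈ D, ∀ τ, ω₀ • w' τ = L ⟨w τ, hmem τ⟩} =
      {w : ℝ → H | ∃ α β : ℝ, w = fun τ => α • v₁ τ + β • v₂ τ} := by
  have twopi_pos : (0:ℝ) < 2 * Real.pi := by positivity
  have hconj1 : ∀ t : ℝ, (starRingEnd ℂ) (Complex.exp (Complex.I * t))
      = Complex.exp (-Complex.I * t) := by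
    intro t
    rw [← Complex.exp_conj]
    congr 1
    simp
  have hconj2 : ∀ t : ℝ, (starRingEnd ℂ) (Complex.exp (-Complex.I * t))
      = Complex.exp (Complex.I * t) := by
    intro t
    rw [← Complex.exp_conj]
    congr 1
    simp
  have hexp : ∀ (z : ℂ) (τ : ℝ), HasDerivAt (fun t : ℝ => Complex.exp (z * t))
      (z * Complex.exp (z * τ)) τ := by
    intro z τ
    have h1 : HasDerivAt (fun t : ℂ => Complex.exp (z * t)) (z * Complex.exp (z * τ)) (τ:ℂ) := by
      exact ((Complex.hasDerivAt_exp (z * τ)).comp (τ:ℂ)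
        ((hasDerivAt_id (τ:ℂ)).const_mul z)).congr_deriv (by ring)
    simpa using h1.comp_ofReal
  have hCv₀D : Cj (v₀ : H) ∈ D := hCD _ v₀.2
  have hLV0 : L ⟨Cj (v₀ : H), hCv₀D⟩ = (-(Complex.I * (ω₀:ℂ))) • Cj (v₀ : H) := by
    have h := (hCL v₀).symm
    rw [heig, hCsmul] at h
    rw [h]
    congr 1
    simp
  -- the complex-combination functions
  set g : ℂ → ℝ → H := fun c τ =>
    (c * Complex.exp (Complex.I * τ)) • (v₀ : H) +
      ((starRingEnd ℂ c) * Complex.exp (-Complex.I * τ)) • Cj (v₀ : H) with hgdef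
  set g' : ℂ → ℝ → H := fun c τ =>
    (c * (Complex.I * Complex.exp (Complex.I * τ))) • (v₀ : H) +
      ((starRingEnd ℂ c) * (-Complex.I * Complex.exp (-Complex.I * τ))) • Cj (v₀ : H) with hg'def
  have hgd : ∀ (α β : ℝ) (τ : ℝ), α • v₁ τ + β • v₂ τ = g ((α - Complex.I * β)/2) τ := by
    intro α β τ
    rw [hv₁ τ, hv₂ τ, hCsmul, hCsmul, hCsmul, hconj1 τ]
    rw [hgdef]
    simp only [map_div₀, map_sub, map_neg, map_mul, Complex.conj_I, Complex.conj_ofReal, map_ofNat]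
    simp only [← Complex.coe_algebraMap]
    module
  have hgderiv : ∀ (c : ℂ) (τ : ℝ), HasDerivAt (g c) (g' c τ) τ := by
    intro c τ
    have h1 : HasDerivAt (fun t : ℝ => (c * Complex.exp (Complex.I * t)) • (v₀ : H))
        ((c * (Complex.I * Complex.exp (Complex.I * τ))) • (v₀ : H)) τ :=
      (((hexp Complex.I τ).const_mul c).smul_const _)
    have h2 : HasDerivAt (fun t : ℝ =>
        ((starRingEnd ℂ c) * Complex.exp (-Complex.I * t)) • Cj (v₀ : H))
        (((starRingEnd ℂ c) * (-Complex.I * Complex.exp (-Complex.I * τ))) • Cj (v₀ : H)) τ :=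
      (((hexp (-Complex.I) τ).const_mul _).smul_const _)
    exact h1.add h2
  have hgmem : ∀ (c : ℂ) (τ : ℝ), g c τ ∈ D := fun c τ =>
    D.add_mem (D.smul_mem _ v₀.2) (D.smul_mem _ hCv₀D)
  have hgsub : ∀ (c : ℂ) (τ : ℝ), (⟨g c τ, hgmem c τ⟩ : D) =
      (c * Complex.exp (Complex.I * τ)) • v₀ +
        ((starRingEnd ℂ c) * Complex.exp (-Complex.I * τ)) • (⟨Cj (v₀:H), hCv₀D⟩ : D) :=
    fun c τ => Subtype.ext rfl
  have hgode : ∀ (c : ℂ) (τ : ℝ), ω₀ • g' c τ = L ⟨g c τ, hgmem c τ⟩ := by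
    intro c τ
    rw [hgsub c τ, map_add, map_smul, map_smul, heig, hLV0, hg'def]
    simp only [← Complex.coe_algebraMap]
    module
  have hgreal : ∀ (c : ℂ) (τ : ℝ), Cj (g c τ) = g c τ := by
    intro c τ
    rw [hgdef]
    simp only []
    rw [hCadd, hCsmul, hCsmul, hCinvol, map_mul, map_mul, hconj1, hconj2, Complex.conj_conj]
    exact add_comm _ _
  have hgper : ∀ (c : ℂ) (τ : ℝ), g c (τ + 2 * Real.pi) = g c τ := by
    intro c τ
    rw [hgdef]
    simp only []
    congr 2
    · rw [Complex.ofReal_add]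
      rw [mul_add, Complex.exp_add]
      rw [show (Complex.I * (2 * Real.pi : ℝ) : ℂ) = 2 * Real.pi * Complex.I by push_cast; ring,
        Complex.exp_two_pi_mul_I, mul_one]
    · rw [Complex.ofReal_add]
      rw [mul_add, Complex.exp_add]
      rw [show (-Complex.I * (2 * Real.pi : ℝ) : ℂ) = (-1 : ℤ) * (2 * Real.pi * Complex.I) by
        push_cast; ring, Complex.exp_int_mul, Complex.exp_two_pi_mul_I, one_zpow, mul_one]
  have hgmean : ∀ c : ℂ, (∫ τ in (0:ℝ)..(2 * Real.pi), g c τ) = 0 := by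
    intro c
    have hint1 : (∫ τ in (0:ℝ)..(2 * Real.pi), Complex.exp (Complex.I * τ)) = 0 := by
      have := integral_exp_int 1 one_ne_zero
      rw [← this]
      apply intervalIntegral.integral_congr
      intro x _
      norm_num
    have hint2 : (∫ τ in (0:ℝ)..(2 * Real.pi), Complex.exp (-Complex.I * τ)) = 0 := by
      have := integral_exp_int (-1) (by norm_num)
      rw [← this]
      apply intervalIntegral.integral_congr
      intro x _
      push_cast
      norm_num
    rw [hgdef]
    simp only []
    have i1 : IntervalIntegrable (fun τ : ℝ => (c * Complex.exp (Complex.I * τ)) • (v₀:H))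
        MeasureTheory.volume 0 (2*Real.pi) := Continuous.intervalIntegrable (by fun_prop) _ _
    have i2 : IntervalIntegrable
        (fun τ : ℝ => ((starRingEnd ℂ c) * Complex.exp (-Complex.I * τ)) • Cj (v₀:H))
        MeasureTheory.volume 0 (2*Real.pi) := Continuous.intervalIntegrable (by fun_prop) _ _
    rw [intervalIntegral.integral_add i1 i2]
    rw [intervalIntegral.integral_smul_const, intervalIntegral.integral_smul_const,
      intervalIntegral.integral_const_mul, intervalIntegral.integral_const_mul,
      hint1, hint2]
    simp
  apply Set.eq_of_subset_of_subset
  · -- forward direction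
    rintro w ⟨w', hd, hreal, hper, hmean, hmemD, hode⟩
    have hwcont : Continuous w := continuous_iff_continuousAt.mpr fun τ => (hd τ).continuousAt
    have hcexp : ∀ ℓ : ℤ, Continuous (fun τ : ℝ => Complex.exp (-(Complex.I * ℓ * τ))) :=
      fun ℓ => Complex.continuous_exp.comp ((continuous_const.mul Complex.continuous_ofReal).neg)
    have hcexpk : ∀ k : ℤ, ∀ z : ℂ, ∀ v : H,
        Continuous (fun τ : ℝ => (z * Complex.exp (Complex.I * (k:ℂ) * τ)) • v) :=
      fun k z v => (continuous_const.mul (Complex.continuous_exp.comp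
        (continuous_const.mul Complex.continuous_ofReal))).smul continuous_const
    have hw2π : w (2 * Real.pi) = w 0 := by
      have := hper 0
      rwa [zero_add] at this
    have hCneg : ∀ x : H, Cj (-x) = -Cj x := fun x => by
      have := hCsmul (-1) x
      simpa using this
    have hCsub : ∀ x y : H, Cj (x - y) = Cj x - Cj y := fun x y => by
      rw [sub_eq_add_neg, hCadd, hCneg, ← sub_eq_add_neg]
    set Sg : Set (H × H) := {p : H × H | ∃ h : p.1 ∈ D, L ⟨p.1, h⟩ = p.2} with hSgdef
    have hS0 : (0 : H × H) ∈ Sg := ⟨D.zero_mem, by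
      rw [show ((⟨(0 : H × H).1, D.zero_mem⟩ : D)) = (0 : D) from Subtype.ext rfl, map_zero]; rfl⟩
    have hSadd : ∀ x ∈ Sg, ∀ y ∈ Sg, x + y ∈ Sg := by
      rintro ⟨x1, x2⟩ ⟨hx, ex⟩ ⟨y1, y2⟩ ⟨hy, ey⟩
      exact ⟨D.add_mem hx hy, by
        show L ⟨x1 + y1, D.add_mem hx hy⟩ = x2 + y2
        rw [show ((⟨x1 + y1, D.add_mem hx hy⟩ : D)) = ⟨x1, hx⟩ + ⟨y1, hy⟩ from Subtype.ext rfl,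
          map_add, ex, ey]⟩
    have hSsmul : ∀ (r : ℝ), ∀ x ∈ Sg, r • x ∈ Sg := by
      rintro r ⟨x1, x2⟩ ⟨hx, ex⟩
      have hm : r • x1 ∈ D := by
        rw [← Complex.coe_smul]
        exact D.smul_mem _ hx
      exact ⟨hm, by
        show L ⟨r • x1, hm⟩ = r • x2
        rw [show ((⟨r • x1, hm⟩ : D)) = (r : ℂ) • ⟨x1, hx⟩ from
          Subtype.ext (by simp [Complex.coe_smul]), map_smul, ex]
        show (r : ℂ) • x2 = r • x2
        rw [Complex.coe_smul]⟩
    set A : ℤ → H := fun ℓ => ∫ τ in (0:ℝ)..(2 * Real.pi),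
      Complex.exp (-(Complex.I * ℓ) * τ) • w τ with hAdef
    have key : ∀ ℓ : ℤ, ((A ℓ, (Complex.I * ℓ * ω₀) • A ℓ) : H × H) ∈ Sg := by
      intro ℓ
      set eℓ : ℝ → ℂ := fun τ => Complex.exp (-(Complex.I * ℓ) * τ) with heℓ
      have hecont : Continuous (fun τ : ℝ => eℓ τ • w τ) :=
        (Complex.continuous_exp.comp (by continuity)).smul hwcont
      set Φ : ℝ → H := fun t => ∫ τ in (0:ℝ)..t, eℓ τ • w τ with hΦ
      have hΦd : ∀ t, HasDerivAt Φ (eℓ t • w t) t := fun t =>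
        (Continuous.integral_hasStrictDerivAt hecont 0 t).hasDerivAt
      set K : ℝ → H := fun t => ω₀ • (eℓ t • w t) + (Complex.I * ℓ * ω₀) • Φ t with hK
      have hKd : ∀ t, HasDerivAt K (ω₀ • (eℓ t • w' t)) t := by
        intro t
        have h1 : HasDerivAt (fun τ => eℓ τ • w τ)
            (eℓ t • w' t + (-(Complex.I * ℓ) * eℓ t) • w t) t :=
          ((hexp (-(Complex.I * ℓ)) t).smul (hd t))
        have h2 := (h1.const_smul ω₀).add ((hΦd t).const_smul (Complex.I * ℓ * ω₀))
        convert h2 using 1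
        show ω₀ • (eℓ t • w' t) = ω₀ • (eℓ t • w' t + (-(Complex.I * ℓ) * eℓ t) • w t)
          + (Complex.I * ℓ * ω₀) • eℓ t • w t
        simp only [← Complex.coe_smul]
        module
        rfl
      have hFd : ∀ t, HasDerivAt (fun t => ((Φ t, K t) : H × H))
          ((eℓ t • w t, ω₀ • (eℓ t • w' t))) t := fun t => (hΦd t).prodMk (hKd t)
      have hfmem : ∀ t, ((eℓ t • w t, ω₀ • (eℓ t • w' t)) : H × H) ∈ Sg := by
        intro t
        exact ⟨D.smul_mem _ (hmemD t), by
          rw [show ((⟨eℓ t • w t, D.smul_mem _ (hmemD t)⟩ : D)) = eℓ t • ⟨w t, hmemD t⟩ from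
            Subtype.ext rfl, map_smul, ← hode t]
          exact (smul_comm _ _ _)⟩
      have hmem2 := hk_mem hclosed hS0 hSadd hSsmul twopi_pos _ _ hFd hfmem
      have hΦ0 : Φ 0 = 0 := intervalIntegral.integral_same
      have he0 : eℓ 0 = 1 := by simp [heℓ]
      have he2π : eℓ (2 * Real.pi) = 1 := by
        rw [heℓ]
        show Complex.exp (-(Complex.I * ℓ) * ((2 * Real.pi : ℝ) : ℂ)) = 1
        rw [show (-(Complex.I * ℓ) * ((2 * Real.pi : ℝ) : ℂ)) =
          ((-ℓ : ℤ) : ℂ) * (2 * Real.pi * Complex.I) by push_cast; ring]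
        exact Complex.exp_int_mul_two_pi_mul_I _
      have heq : ((Φ (2 * Real.pi), K (2 * Real.pi)) : H × H) - (Φ 0, K 0)
          = (A ℓ, (Complex.I * ℓ * ω₀) • A ℓ) := by
        have hfst : Φ (2 * Real.pi) - Φ 0 = A ℓ := by rw [hΦ0, sub_zero]
        have hsnd : K (2 * Real.pi) - K 0 = (Complex.I * ℓ * ω₀) • A ℓ := by
          rw [hK]
          show ω₀ • (eℓ (2 * Real.pi) • w (2 * Real.pi)) + (Complex.I * ℓ * ω₀) • Φ (2 * Real.pi)
            - (ω₀ • (eℓ 0 • w 0) + (Complex.I * ℓ * ω₀) • Φ 0)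
            = (Complex.I * ℓ * ω₀) • A ℓ
          rw [hΦ0, he0, he2π, hw2π, smul_zero, add_zero]
          have : Φ (2 * Real.pi) = A ℓ := rfl
          rw [this]
          abel
        calc ((Φ (2 * Real.pi), K (2 * Real.pi)) : H × H) - (Φ 0, K 0)
            = (Φ (2 * Real.pi) - Φ 0, K (2 * Real.pi) - K 0) := rfl
          _ = (A ℓ, (Complex.I * ℓ * ω₀) • A ℓ) := by rw [hfst, hsnd]
      rw [heq] at hmem2
      exact hmem2
    have hA0 : A 0 = 0 := by
      have h1 : A 0 = ∫ τ in (0:ℝ)..(2 * Real.pi), w τ := by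
        apply intervalIntegral.integral_congr
        intro τ _
        show Complex.exp (-(Complex.I * ((0:ℤ):ℂ)) * τ) • w τ = w τ
        norm_num
      rw [h1, hmean]
    have hAhigh : ∀ ℓ : ℤ, 2 ≤ |ℓ| → A ℓ = 0 := by
      intro ℓ hl
      obtain ⟨hm, he⟩ := key ℓ
      have hker : (⟨A ℓ, hm⟩ : D) ∈
          LinearMap.ker (L - (Complex.I * (ℓ:ℂ) * (ω₀:ℂ)) • D.subtype) := by
        rw [LinearMap.mem_ker, LinearMap.sub_apply, LinearMap.smul_apply, he]
        simp
      rw [hnotk ℓ hl, Submodule.mem_bot] at hker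
      have := congrArg Subtype.val hker
      simpa using this
    -- ℓ = 1
    obtain ⟨hm1, he1⟩ := key 1
    have hker1 : (⟨A 1, hm1⟩ : D) ∈
        LinearMap.ker (L - (Complex.I * (ω₀:ℂ)) • D.subtype) := by
      rw [LinearMap.mem_ker, LinearMap.sub_apply, LinearMap.smul_apply, he1]
      push_cast
      simp
    rw [hsimple] at hker1
    obtain ⟨z, hz⟩ := Submodule.mem_span_singleton.mp hker1
    have hA1 : A 1 = z • (v₀ : H) := by
      have := congrArg Subtype.val hz
      simpa using this.symm
    -- ℓ = -1
    obtain ⟨hm2, he2⟩ := key (-1)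
    have hBD : Cj (A (-1)) ∈ D := hCD _ hm2
    have hLB : L ⟨Cj (A (-1)), hBD⟩ = (Complex.I * (ω₀:ℂ)) • Cj (A (-1)) := by
      have h := (hCL ⟨A (-1), hm2⟩).symm
      rw [he2, hCsmul] at h
      rw [h]
      congr 1
      push_cast
      simp
    have hkerm : (⟨Cj (A (-1)), hBD⟩ : D) ∈
        LinearMap.ker (L - (Complex.I * (ω₀:ℂ)) • D.subtype) := by
      rw [LinearMap.mem_ker, LinearMap.sub_apply, LinearMap.smul_apply, hLB]
      simp
    rw [hsimple] at hkerm
    obtain ⟨z', hz'⟩ := Submodule.mem_span_singleton.mp hkerm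
    have hAm1 : A (-1) = (starRingEnd ℂ z') • Cj (v₀ : H) := by
      have h1 : Cj (A (-1)) = z' • (v₀ : H) := by
        have := congrArg Subtype.val hz'
        simpa using this.symm
      calc A (-1) = Cj (Cj (A (-1))) := (hCinvol _).symm
        _ = Cj (z' • (v₀ : H)) := by rw [h1]
        _ = (starRingEnd ℂ z') • Cj (v₀ : H) := hCsmul _ _
    -- the candidate coefficient
    set pc : ℂ := ((2 * Real.pi : ℝ) : ℂ) with hpcdef
    have hpc0 : pc ≠ 0 := by
      rw [hpcdef]
      exact_mod_cast ne_of_gt twopi_pos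
    set c : ℂ := z / pc with hcdef
    set u : ℝ → H := fun τ => w τ - g c τ with hudef
    have hgcont : Continuous (g c) := by
      rw [hgdef]
      fun_prop
    have hucont : Continuous u := hwcont.sub hgcont
    have huper : ∀ τ, u (τ + 2 * Real.pi) = u τ := fun τ => by
      rw [hudef]
      show w (τ + 2 * Real.pi) - g c (τ + 2 * Real.pi) = w τ - g c τ
      rw [hper τ, hgper c τ]
    have hureal : ∀ τ, Cj (u τ) = u τ := fun τ => by
      rw [hudef]
      show Cj (w τ - g c τ) = w τ - g c τ
      rw [hCsub, hreal τ, hgreal c τ]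
    -- Fourier coefficients of u
    have hAcan : ∀ ℓ : ℤ, (∫ τ in (0:ℝ)..(2 * Real.pi),
        Complex.exp (-(Complex.I * ℓ * τ)) • w τ) = A ℓ := by
      intro ℓ
      apply intervalIntegral.integral_congr
      intro τ _
      show Complex.exp (-(Complex.I * ℓ * τ)) • w τ = Complex.exp (-(Complex.I * ℓ) * τ) • w τ
      rw [neg_mul]
    have iw : ∀ ℓ : ℤ, IntervalIntegrable (fun τ : ℝ => Complex.exp (-(Complex.I * ℓ * τ)) • w τ)
        MeasureTheory.volume 0 (2 * Real.pi) :=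
      fun ℓ => ((hcexp ℓ).smul hwcont).intervalIntegrable _ _
    have ig : ∀ ℓ : ℤ, IntervalIntegrable
        (fun τ : ℝ => Complex.exp (-(Complex.I * ℓ * τ)) • g c τ)
        MeasureTheory.volume 0 (2 * Real.pi) :=
      fun ℓ => ((hcexp ℓ).smul hgcont).intervalIntegrable _ _
    have hgcoeff : ∀ ℓ : ℤ, (∫ τ in (0:ℝ)..(2 * Real.pi),
        Complex.exp (-(Complex.I * ℓ * τ)) • g c τ)
        = (if ℓ = 1 then (2 * Real.pi : ℝ) • (c • (v₀ : H)) else 0)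
          + (if ℓ = -1 then (2 * Real.pi : ℝ) • ((starRingEnd ℂ c) • Cj (v₀ : H)) else 0) := by
      intro ℓ
      have hsplit : (fun τ : ℝ => Complex.exp (-(Complex.I * ℓ * τ)) • g c τ)
          = fun τ : ℝ => Complex.exp (-(Complex.I * ℓ * τ)) •
              ((c * Complex.exp (Complex.I * ((1:ℤ):ℂ) * τ)) • (v₀ : H))
            + Complex.exp (-(Complex.I * ℓ * τ)) •
              (((starRingEnd ℂ c) * Complex.exp (Complex.I * ((-1:ℤ):ℂ) * τ)) • Cj (v₀ : H)) := by
        funext τ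
        rw [hgdef]
        show Complex.exp (-(Complex.I * ℓ * τ)) •
            ((c * Complex.exp (Complex.I * τ)) • (v₀ : H)
              + ((starRingEnd ℂ c) * Complex.exp (-Complex.I * τ)) • Cj (v₀ : H)) = _
        rw [smul_add]
        congr 3
        · congr 1
          push_cast
          ring
        · congr 1
          push_cast
          ring
      rw [hsplit, intervalIntegral.integral_add
        (f := fun τ : ℝ => Complex.exp (-(Complex.I * ℓ * τ)) •
          ((c * Complex.exp (Complex.I * ((1:ℤ):ℂ) * τ)) • (v₀ : H)))
        (g := fun τ : ℝ => Complex.exp (-(Complex.I * ℓ * τ)) •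
          (((starRingEnd ℂ c) * Complex.exp (Complex.I * ((-1:ℤ):ℂ) * τ)) • Cj (v₀ : H)))
        (((hcexp ℓ).smul (hcexpk 1 c _)).intervalIntegrable _ _)
        (((hcexp ℓ).smul (hcexpk (-1) _ _)).intervalIntegrable _ _),
        coeff_exp_smul, coeff_exp_smul]
    have hCu : ∀ ℓ : ℤ, (∫ τ in (0:ℝ)..(2 * Real.pi),
        Complex.exp (-(Complex.I * ℓ * τ)) • u τ)
        = A ℓ - ((if ℓ = 1 then (2 * Real.pi : ℝ) • (c • (v₀ : H)) else 0)
          + (if ℓ = -1 then (2 * Real.pi : ℝ) • ((starRingEnd ℂ c) • Cj (v₀ : H)) else 0)) := by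
      intro ℓ
      have h1 : (fun τ : ℝ => Complex.exp (-(Complex.I * ℓ * τ)) • u τ)
          = fun τ : ℝ => Complex.exp (-(Complex.I * ℓ * τ)) • w τ
            - Complex.exp (-(Complex.I * ℓ * τ)) • g c τ := by
        funext τ
        rw [hudef]
        show Complex.exp (-(Complex.I * ℓ * τ)) • (w τ - g c τ) = _
        rw [smul_sub]
      rw [h1, intervalIntegral.integral_sub (iw ℓ) (ig ℓ), hAcan ℓ, hgcoeff ℓ]
    set m₀ : H := A (-1) - (2 * Real.pi : ℝ) • ((starRingEnd ℂ c) • Cj (v₀ : H)) with hm₀def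
    set U : ℝ → H := fun τ =>
      u τ - (pc⁻¹ * Complex.exp (Complex.I * ((-1:ℤ):ℂ) * τ)) • m₀ with hUdef
    have hexpm : Continuous (fun τ : ℝ => (pc⁻¹ * Complex.exp (Complex.I * ((-1:ℤ):ℂ) * τ)) • m₀) := by
      fun_prop
    have hUcont : Continuous U := hucont.sub hexpm
    have hUper : ∀ τ, U (τ + 2 * Real.pi) = U τ := by
      intro τ
      rw [hUdef]
      show u (τ + 2 * Real.pi) - _ • m₀ = u τ - _ • m₀
      rw [huper τ]
      congr 2
      rw [Complex.ofReal_add, mul_add, Complex.exp_add,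
        show (Complex.I * ((-1:ℤ):ℂ) * ((2 * Real.pi : ℝ):ℂ)) =
          ((-1 : ℤ) : ℂ) * (2 * Real.pi * Complex.I) by push_cast; ring,
        Complex.exp_int_mul_two_pi_mul_I, mul_one]
    have hUcoef : ∀ ℓ : ℤ, (∫ τ in (0:ℝ)..(2 * Real.pi),
        Complex.exp (-(Complex.I * ℓ * τ)) • U τ) = 0 := by
      intro ℓ
      have h1 : (fun τ : ℝ => Complex.exp (-(Complex.I * ℓ * τ)) • U τ)
          = fun τ : ℝ => Complex.exp (-(Complex.I * ℓ * τ)) • u τ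
            - Complex.exp (-(Complex.I * ℓ * τ)) •
                ((pc⁻¹ * Complex.exp (Complex.I * ((-1:ℤ):ℂ) * τ)) • m₀) := by
        funext τ
        rw [hUdef]
        show Complex.exp (-(Complex.I * ℓ * τ)) • (u τ - _ • m₀) = _
        rw [smul_sub]
      have iu : IntervalIntegrable (fun τ : ℝ => Complex.exp (-(Complex.I * ℓ * τ)) • u τ)
          MeasureTheory.volume 0 (2 * Real.pi) :=
        ((hcexp ℓ).smul hucont).intervalIntegrable _ _
      have im : IntervalIntegrable (fun τ : ℝ => Complex.exp (-(Complex.I * ℓ * τ)) •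
          ((pc⁻¹ * Complex.exp (Complex.I * ((-1:ℤ):ℂ) * τ)) • m₀))
          MeasureTheory.volume 0 (2 * Real.pi) :=
        ((hcexp ℓ).smul hexpm).intervalIntegrable _ _
      rw [h1, intervalIntegral.integral_sub iu im, hCu ℓ, coeff_exp_smul]
      by_cases h1' : ℓ = 1
      · subst h1'
        rw [if_pos rfl, if_neg (by decide), if_neg (by decide), hA1]
        have : (2 * Real.pi : ℝ) • (c • (v₀ : H)) = z • (v₀ : H) := by
          rw [← Complex.coe_smul, smul_smul, hcdef, ← hpcdef, mul_div_cancel₀ _ hpc0]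
        rw [this]
        simp
      by_cases h0' : ℓ = 0
      · subst h0'
        rw [if_neg (by decide), if_neg (by decide), if_neg (by decide), hA0]
        simp
      by_cases hm1' : ℓ = -1
      · subst hm1'
        rw [if_pos rfl, if_neg (by decide), if_pos rfl]
        have : (2 * Real.pi : ℝ) • (pc⁻¹ • m₀) = m₀ := by
          rw [← Complex.coe_smul, smul_smul, ← hpcdef, mul_inv_cancel₀ hpc0, one_smul]
        rw [this, hm₀def]
        abel
      · have hab : 2 ≤ |ℓ| := by rcases abs_cases ℓ with ⟨h,_⟩|⟨h,_⟩ <;> omega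
        rw [if_neg h1', if_neg hm1', if_neg hm1', hAhigh ℓ hab]
        simp
    have hU0 : ∀ τ, U τ = 0 := vector_fourier_zero U hUcont hUper hUcoef
    have hueq : ∀ τ, u τ = (pc⁻¹ * Complex.exp (Complex.I * ((-1:ℤ):ℂ) * τ)) • m₀ := by
      intro τ
      have := hU0 τ
      rw [hUdef] at this
      exact sub_eq_zero.mp this
    -- reality forces m₀ = 0
    have hm₀real : Cj m₀ = m₀ := by
      have h1 := hureal 0
      rw [hueq 0] at h1
      simp only [Complex.ofReal_zero, mul_zero, Complex.exp_zero, mul_one] at h1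
      rw [hCsmul] at h1
      have hconjpc : (starRingEnd ℂ) pc⁻¹ = pc⁻¹ := by
        rw [hpcdef, map_inv₀, Complex.conj_ofReal]
      rw [hconjpc] at h1
      have hinv0 : pc⁻¹ ≠ 0 := inv_ne_zero hpc0
      exact smul_right_injective H hinv0 h1
    have hm₀0 : m₀ = 0 := by
      have h1 := hureal (Real.pi / 2)
      rw [hueq (Real.pi / 2)] at h1
      have hexpval : Complex.exp (Complex.I * ((-1:ℤ):ℂ) * ((Real.pi / 2 : ℝ):ℂ)) = -Complex.I := by
        rw [show (Complex.I * ((-1:ℤ):ℂ) * ((Real.pi / 2 : ℝ):ℂ))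
            = ((-(Real.pi / 2) : ℝ) : ℂ) * Complex.I by push_cast; ring,
          Complex.exp_mul_I, ← Complex.ofReal_cos, ← Complex.ofReal_sin]
        rw [Real.cos_neg, Real.sin_neg, Real.cos_pi_div_two, Real.sin_pi_div_two]
        simp
      rw [hexpval, hCsmul, hm₀real] at h1
      have hconj : (starRingEnd ℂ) (pc⁻¹ * -Complex.I) = pc⁻¹ * Complex.I := by
        rw [map_mul, map_inv₀, hpcdef, Complex.conj_ofReal, map_neg, Complex.conj_I, neg_neg]
      rw [hconj] at h1
      have h2 : ((pc⁻¹ * Complex.I) - (pc⁻¹ * -Complex.I)) • m₀ = 0 := by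
        rw [sub_smul, h1, sub_self]
      have h3 : (pc⁻¹ * Complex.I) - (pc⁻¹ * -Complex.I) ≠ 0 := by
        have : (pc⁻¹ * Complex.I) - (pc⁻¹ * -Complex.I) = 2 * pc⁻¹ * Complex.I := by ring
        rw [this]
        simp [hpc0, Complex.I_ne_zero]
      rcases smul_eq_zero.mp h2 with h | h
      · exact absurd h h3
      · exact h
    have huzero : ∀ τ, u τ = 0 := by
      intro τ
      rw [hueq τ, hm₀0, smul_zero]
    refine ⟨2 * c.re, -(2 * c.im), funext fun τ => ?_⟩
    rw [hgd]
    have hc' : (((2 * c.re : ℝ) : ℂ) - Complex.I * ((-(2 * c.im) : ℝ) : ℂ)) / 2 = c := by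
      rw [div_eq_iff (two_ne_zero : (2:ℂ) ≠ 0)]
      push_cast
      simp only [Complex.ext_iff, Complex.sub_re, Complex.sub_im, Complex.mul_re, Complex.mul_im,
        Complex.ofReal_re, Complex.ofReal_im, Complex.I_re, Complex.I_im, Complex.ofReal_neg,
        Complex.neg_re, Complex.neg_im, Complex.ofReal_mul]
      norm_num
      constructor <;> ring
    rw [hc']
    have h9 := huzero τ
    rw [hudef] at h9
    have h9' : w τ - g c τ = 0 := h9
    exact sub_eq_zero.mp h9'
  · -- backward direction
    rintro w ⟨α, β, rfl⟩
    have hw : (fun τ => α • v₁ τ + β • v₂ τ) = g ((α - Complex.I * β)/2) := funext (hgd α β)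
    rw [Set.mem_setOf_eq, hw]
    exact ⟨g' ((α - Complex.I * β)/2), hgderiv _, hgreal _, hgper _, hgmean _,
      hgmem _, fun τ => hgode _ τ⟩
end

section
/- Let w be as in the previous statement, and suppose in addition that for all 0 ≤ s ≤ τ ≤ 2π, ‖∇w(τ)‖₂² − ‖∇w(s)‖₂² = ∫ₛ^τ ⟨∂_ξ w(ξ), PΔw(ξ)⟩ dξ (where ⟨·,·⟩ is interpreted with appropriate sign convention). Then max_{τ∈[0,2π]} ‖∇w(τ)‖₂² ≤ (1/ω) J_ω. -/
open scoped RealInnerProductSpace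
open intervalIntegral

lemma aux_norm_sub {E : Type*} [NormedAddCommGroup E] [NormedSpace ℝ E]
    (f : ℝ → E) (hf : Continuous f) {a b c d : ℝ}
    (hc : c ∈ Set.Icc a b) (hd : d ∈ Set.Icc a b) :
    ‖∫ x in c..d, f x‖ ≤ ∫ x in a..b, ‖f x‖ := by
  have hint : IntervalIntegrable (fun x => ‖f x‖) MeasureTheory.volume a b :=
    hf.norm.intervalIntegrable a b
  have key : ∀ u v : ℝ, u ∈ Set.Icc a b → v ∈ Set.Icc a b → u ≤ v →
      ‖∫ x in u..v, f x‖ ≤ ∫ x in a..b, ‖f x‖ := by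
    intro u v hu hv huv
    calc ‖∫ x in u..v, f x‖ ≤ ∫ x in u..v, ‖f x‖ :=
          intervalIntegral.norm_integral_le_integral_norm huv
      _ ≤ ∫ x in a..b, ‖f x‖ := by
          apply intervalIntegral.integral_mono_interval hu.1 huv hv.2 ?_ hint
          filter_upwards with x using norm_nonneg _
  rcases le_total c d with h | h
  · exact key c d hc hd h
  · rw [intervalIntegral.integral_symm d c, norm_neg]
    exact key d c hd hc h

/-- Estimate (5.1)₂ of Lemma 5.1, abstract form. In the setting of the previous statement,
if in addition `G(τ) − G(s) = ∫ₛ^τ ⟨∂_ξ w(ξ), PΔw(ξ)⟩ dξ` for `0 ≤ s ≤ τ ≤ 2π`, then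
`max_{τ∈[0,2π]} G(τ) ≤ J_ω/ω`, where `G(τ)` plays the role of `‖∇w(τ)‖₂²` and
`J_ω = ∫₀^{2π}(ω²‖∂_τ w‖₂² + ‖PΔw‖₂²)dτ`. -/
theorem gradient_max_estimate
    {E : Type*} [NormedAddCommGroup E] [InnerProductSpace ℝ E] [CompleteSpace E]
    (ω : ℝ) (hω : 0 < ω)
    (w dw Lw : ℝ → E) (G : ℝ → ℝ)
    (hderiv : ∀ τ, HasDerivAt w (dw τ) τ)
    (hper : ∀ τ, w (τ + 2 * Real.pi) = w τ)
    (hmean : (∫ τ in (0:ℝ)..(2 * Real.pi), w τ) = 0)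
    (hdwcont : Continuous dw) (hLwcont : Continuous Lw)
    (hG : ∀ τ, G τ = -⟪Lw τ, w τ⟫) (hGpos : ∀ τ, 0 ≤ G τ)
    (hGdiff : ∀ s τ : ℝ, 0 ≤ s → s ≤ τ → τ ≤ 2 * Real.pi →
      G τ - G s = ∫ ξ in s..τ, ⟪dw ξ, Lw ξ⟫) :
    ∀ τ ∈ Set.Icc (0:ℝ) (2 * Real.pi),
      G τ ≤ (1 / ω) * ∫ ξ in (0:ℝ)..(2 * Real.pi),
        (ω ^ 2 * ‖dw ξ‖ ^ 2 + ‖Lw ξ‖ ^ 2) := by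
  intro τ hτ
  set T : ℝ := 2 * Real.pi with hTdef
  have hT : 0 < T := by positivity
  set J : ℝ := ∫ ξ in (0:ℝ)..T, (ω ^ 2 * ‖dw ξ‖ ^ 2 + ‖Lw ξ‖ ^ 2) with hJdef
  have hwcont : Continuous w := by
    rw [continuous_iff_continuousAt]; exact fun x => (hderiv x).continuousAt
  have hGcont : Continuous G := by
    have : G = fun τ => -⟪Lw τ, w τ⟫ := funext hG
    rw [this]
    exact (hLwcont.inner hwcont).neg
  -- integrability facts
  have hJint : IntervalIntegrable (fun ξ => ω ^ 2 * ‖dw ξ‖ ^ 2 + ‖Lw ξ‖ ^ 2)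
      MeasureTheory.volume 0 T := by
    apply Continuous.intervalIntegrable; continuity
  have hprodint : IntervalIntegrable (fun ξ => ‖dw ξ‖ * ‖Lw ξ‖)
      MeasureTheory.volume 0 T := (hdwcont.norm.mul hLwcont.norm).intervalIntegrable 0 T
  -- pointwise AM-GM : ‖u‖‖v‖ ≤ (1/(2ω)) (ω²‖u‖² + ‖v‖²)
  have hK1 : (∫ ξ in (0:ℝ)..T, ‖dw ξ‖ * ‖Lw ξ‖) ≤ (1 / (2 * ω)) * J := by
    have : (1 / (2 * ω)) * J
        = ∫ ξ in (0:ℝ)..T, (1 / (2 * ω)) * (ω ^ 2 * ‖dw ξ‖ ^ 2 + ‖Lw ξ‖ ^ 2) := by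
      rw [hJdef, intervalIntegral.integral_const_mul]
    rw [this]
    apply intervalIntegral.integral_mono_on hT.le hprodint (hJint.const_mul _)
    intro x _
    have hkey : (1 / (2*ω)) * (ω ^ 2 * ‖dw x‖ ^ 2 + ‖Lw x‖ ^ 2) - ‖dw x‖ * ‖Lw x‖
        = (1 / (2*ω)) * (ω * ‖dw x‖ - ‖Lw x‖)^2 := by field_simp; ring
    rw [← sub_nonneg, hkey]; positivity
  -- FTC
  have hfund : ∀ u s : ℝ, (∫ ξ in u..s, dw ξ) = w s - w u := by
    intro u s
    exact intervalIntegral.integral_eq_sub_of_hasDerivAt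
      (fun x _ => hderiv x) (hdwcont.intervalIntegrable u s)
  -- zero mean bound : ‖w s‖ ≤ ∫₀ᵀ ‖dw‖
  have hwbound : ∀ s ∈ Set.Icc (0:ℝ) T, ‖w s‖ ≤ ∫ ξ in (0:ℝ)..T, ‖dw ξ‖ := by
    intro s hs
    have hrep : T • w s = ∫ u in (0:ℝ)..T, (w s - w u) := by
      rw [intervalIntegral.integral_sub (continuous_const.intervalIntegrable 0 T)
        (hwcont.intervalIntegrable 0 T), hmean, sub_zero,
        intervalIntegral.integral_const, sub_zero]
    have h1 : ‖T • w s‖ ≤ ∫ u in (0:ℝ)..T, ‖w s - w u‖ := by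
      rw [hrep]
      exact intervalIntegral.norm_integral_le_integral_norm hT.le
    have h2 : (∫ u in (0:ℝ)..T, ‖w s - w u‖)
        ≤ ∫ u in (0:ℝ)..T, (∫ ξ in (0:ℝ)..T, ‖dw ξ‖) := by
      apply intervalIntegral.integral_mono_on hT.le
        (((continuous_const.sub hwcont).norm).intervalIntegrable 0 T)
        (intervalIntegrable_const)
      intro u hu
      have : ‖w s - w u‖ = ‖∫ ξ in u..s, dw ξ‖ := by rw [hfund]
      change ‖w s - w u‖ ≤ _
      rw [this]
      exact aux_norm_sub dw hdwcont hu hs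
    have h3 : T * ‖w s‖ ≤ ∫ u in (0:ℝ)..T, ‖w s - w u‖ := by
      calc T * ‖w s‖ = ‖T • w s‖ := by
            rw [norm_smul, Real.norm_eq_abs, abs_of_pos hT]
        _ ≤ _ := h1
    have h4 : (∫ _ in (0:ℝ)..T, (∫ ξ in (0:ℝ)..T, ‖dw ξ‖)) = T * ∫ ξ in (0:ℝ)..T, ‖dw ξ‖ := by
      rw [intervalIntegral.integral_const, smul_eq_mul, sub_zero]
    have h5 : T * ‖w s‖ ≤ T * ∫ ξ in (0:ℝ)..T, ‖dw ξ‖ := by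
      rw [← h4]; exact h3.trans h2
    exact le_of_mul_le_mul_left h5 hT
  -- mean bound on ∫ G
  have hintG : (∫ s in (0:ℝ)..T, G s) ≤ (Real.pi / ω) * J := by
    have step1 : (∫ s in (0:ℝ)..T, G s)
        ≤ ∫ s in (0:ℝ)..T, ‖Lw s‖ * ‖w s‖ := by
      apply intervalIntegral.integral_mono_on hT.le (hGcont.intervalIntegrable 0 T)
        ((hLwcont.norm.mul hwcont.norm).intervalIntegrable 0 T)
      intro x _
      rw [hG]
      calc -⟪Lw x, w x⟫ ≤ |⟪Lw x, w x⟫| := neg_le_abs _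
        _ ≤ ‖Lw x‖ * ‖w x‖ := abs_real_inner_le_norm _ _
    set A : ℝ := ∫ ξ in (0:ℝ)..T, ‖dw ξ‖ with hA
    have step2 : (∫ s in (0:ℝ)..T, ‖Lw s‖ * ‖w s‖)
        ≤ ∫ s in (0:ℝ)..T, ‖Lw s‖ * A := by
      apply intervalIntegral.integral_mono_on hT.le
        ((hLwcont.norm.mul hwcont.norm).intervalIntegrable 0 T)
        ((hLwcont.norm.mul continuous_const).intervalIntegrable 0 T)
      intro x hx
      exact mul_le_mul_of_nonneg_left (hwbound x hx) (norm_nonneg _)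
    have step3 : (∫ s in (0:ℝ)..T, ‖Lw s‖ * A)
        = A * ∫ s in (0:ℝ)..T, ‖Lw s‖ := by
      rw [intervalIntegral.integral_mul_const]; ring
    set B : ℝ := ∫ ξ in (0:ℝ)..T, ‖Lw ξ‖ with hB
    set Y2 : ℝ := ∫ ξ in (0:ℝ)..T, ‖Lw ξ‖ ^ 2 with hY2
    have step4 : A * B ≤ (Real.pi / ω) * J := by
      have h1 : ∀ u : ℝ, ‖dw u‖ * B ≤ (1 / (2 * ω)) * (T * (ω ^ 2 * ‖dw u‖ ^ 2) + Y2) := by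
        intro u
        have e1 : ‖dw u‖ * B = ∫ v in (0:ℝ)..T, ‖dw u‖ * ‖Lw v‖ := by
          rw [intervalIntegral.integral_const_mul]
        have e2 : (∫ v in (0:ℝ)..T, ‖dw u‖ * ‖Lw v‖)
            ≤ ∫ v in (0:ℝ)..T, (1 / (2 * ω)) * (ω ^ 2 * ‖dw u‖ ^ 2 + ‖Lw v‖ ^ 2) := by
          apply intervalIntegral.integral_mono_on hT.le
            ((continuous_const.mul hLwcont.norm).intervalIntegrable 0 T)
            ((continuous_const.mul (continuous_const.add (hLwcont.norm.pow 2))).intervalIntegrable 0 T)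
          intro v _
          have : (1 / (2*ω)) * (ω ^ 2 * ‖dw u‖ ^ 2 + ‖Lw v‖ ^ 2) - ‖dw u‖ * ‖Lw v‖
              = (1 / (2*ω)) * (ω * ‖dw u‖ - ‖Lw v‖)^2 := by field_simp; ring
          change ‖dw u‖ * ‖Lw v‖ ≤ (1 / (2*ω)) * (ω ^ 2 * ‖dw u‖ ^ 2 + ‖Lw v‖ ^ 2)
          rw [← sub_nonneg, this]; positivity
        have e3 : (∫ v in (0:ℝ)..T, (1 / (2 * ω)) * (ω ^ 2 * ‖dw u‖ ^ 2 + ‖Lw v‖ ^ 2))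
            = (1 / (2 * ω)) * (T * (ω ^ 2 * ‖dw u‖ ^ 2) + Y2) := by
          rw [intervalIntegral.integral_const_mul, intervalIntegral.integral_add
            (g := fun x => ‖Lw x‖ ^ 2) (intervalIntegrable_const) ((hLwcont.norm.pow 2).intervalIntegrable 0 T),
            intervalIntegral.integral_const, smul_eq_mul, sub_zero]
        rw [e1]; exact e2.trans (le_of_eq e3)
      have h2 : A * B = ∫ u in (0:ℝ)..T, ‖dw u‖ * B := by
        rw [intervalIntegral.integral_mul_const]
      have h3 : (∫ u in (0:ℝ)..T, ‖dw u‖ * B)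
          ≤ ∫ u in (0:ℝ)..T, (1 / (2 * ω)) * (T * (ω ^ 2 * ‖dw u‖ ^ 2) + Y2) := by
        apply intervalIntegral.integral_mono_on hT.le
          ((hdwcont.norm.mul continuous_const).intervalIntegrable 0 T)
          ((continuous_const.mul ((continuous_const.mul (continuous_const.mul
            (hdwcont.norm.pow 2))).add continuous_const)).intervalIntegrable 0 T)
        intro u _
        exact h1 u
      set X2 : ℝ := ∫ ξ in (0:ℝ)..T, ‖dw ξ‖ ^ 2 with hX2
      have h4 : (∫ u in (0:ℝ)..T, (1 / (2 * ω)) * (T * (ω ^ 2 * ‖dw u‖ ^ 2) + Y2))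
          = (1 / (2 * ω)) * (T * (ω ^ 2 * X2) + T * Y2) := by
        rw [intervalIntegral.integral_const_mul, intervalIntegral.integral_add
          ?_ (intervalIntegrable_const), intervalIntegral.integral_const, smul_eq_mul, sub_zero]
        · congr 1
          rw [show (fun u : ℝ => T * (ω ^ 2 * ‖dw u‖ ^ 2)) = fun u : ℝ => (T * ω ^ 2) * ‖dw u‖ ^ 2
              by funext u; ring, intervalIntegral.integral_const_mul, hX2]
          ring
        · exact (continuous_const.mul (continuous_const.mul (hdwcont.norm.pow 2))).intervalIntegrable 0 T
      have hJsplit : J = ω ^ 2 * X2 + Y2 := by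
        rw [hJdef, intervalIntegral.integral_add (f := fun x => ω ^ 2 * ‖dw x‖ ^ 2) (g := fun x => ‖Lw x‖ ^ 2)
          ((continuous_const.mul (hdwcont.norm.pow 2)).intervalIntegrable 0 T)
          ((hLwcont.norm.pow 2).intervalIntegrable 0 T),
          intervalIntegral.integral_const_mul, hX2, hY2]
      have : A * B ≤ (1 / (2 * ω)) * (T * (ω ^ 2 * X2) + T * Y2) := by
        rw [h2]; exact h3.trans (le_of_eq h4)
      calc A * B ≤ (1 / (2 * ω)) * (T * (ω ^ 2 * X2) + T * Y2) := this
        _ = (Real.pi / ω) * J := by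
            rw [hJsplit, hTdef]; field_simp
    calc (∫ s in (0:ℝ)..T, G s) ≤ _ := step1
      _ ≤ _ := step2
      _ = A * B := step3
      _ ≤ (Real.pi / ω) * J := step4
  -- minimum of G
  obtain ⟨s₀, hs₀mem, hs₀min⟩ := isCompact_Icc.exists_isMinOn
    (Set.nonempty_Icc.mpr hT.le) hGcont.continuousOn
  have hmin : T * G s₀ ≤ ∫ s in (0:ℝ)..T, G s := by
    have : (∫ _ in (0:ℝ)..T, G s₀) ≤ ∫ s in (0:ℝ)..T, G s := by
      apply intervalIntegral.integral_mono_on hT.le intervalIntegrable_const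
        (hGcont.intervalIntegrable 0 T)
      intro x hx; exact hs₀min hx
    rwa [intervalIntegral.integral_const, smul_eq_mul, sub_zero] at this
  have hGs₀ : G s₀ ≤ (1 / (2 * ω)) * J := by
    have h1 : T * G s₀ ≤ (Real.pi / ω) * J := hmin.trans hintG
    have h2 : (Real.pi / ω) * J = T * ((1 / (2 * ω)) * J) := by
      rw [hTdef]; field_simp
    rw [h2] at h1
    exact le_of_mul_le_mul_left h1 hT
  -- oscillation bound
  have hosc : |G τ - G s₀| ≤ (1 / (2 * ω)) * J := by
    have key : ∀ a b : ℝ, a ∈ Set.Icc (0:ℝ) T → b ∈ Set.Icc (0:ℝ) T → a ≤ b →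
        |G b - G a| ≤ (1 / (2 * ω)) * J := by
      intro a b ha hb hab
      rw [hGdiff a b ha.1 hab hb.2]
      have h1 : |∫ ξ in a..b, ⟪dw ξ, Lw ξ⟫| ≤ ∫ ξ in (0:ℝ)..T, |⟪dw ξ, Lw ξ⟫| := by
        have := aux_norm_sub (fun ξ => ⟪dw ξ, Lw ξ⟫) (hdwcont.inner hLwcont) ha hb
        simpa [Real.norm_eq_abs] using this
      have h2 : (∫ ξ in (0:ℝ)..T, |⟪dw ξ, Lw ξ⟫|) ≤ ∫ ξ in (0:ℝ)..T, ‖dw ξ‖ * ‖Lw ξ‖ := by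
        apply intervalIntegral.integral_mono_on hT.le
          (((hdwcont.inner hLwcont).abs).intervalIntegrable 0 T) hprodint
        intro x _
        exact abs_real_inner_le_norm _ _
      exact h1.trans (h2.trans hK1)
    rcases le_total s₀ τ with h | h
    · exact key s₀ τ hs₀mem hτ h
    · rw [abs_sub_comm]; exact key τ s₀ hτ hs₀mem h
  have : G τ ≤ G s₀ + |G τ - G s₀| := by
    have := le_abs_self (G τ - G s₀); linarith
  calc G τ ≤ G s₀ + |G τ - G s₀| := this
    _ ≤ (1 / (2 * ω)) * J + (1 / (2 * ω)) * J := add_le_add hGs₀ hosc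
    _ = (1 / ω) * J := by field_simp; ring
end
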